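/- Let π^b be a baseline DTR and write a'_k = π^b_k(h⃗_k). Define π↑ recursively for k = K, K−1, …, 1 by π↑_k(h⃗_k) = π^b_k(h⃗_k)·sgn(𝒞^{π↑/π^b}_k(h⃗_k)) whenever 𝒞^{π↑/π^b}_k(h⃗_k) ≠ 0, and π↑_k(h⃗_k) = π^b_k(h⃗_k) when 𝒞^{π↑/π^b}_k(h⃗_k) = 0 (well-defined since 𝒞^{π↑/π^b}_k depends on π↑ only through π↑_{(k+1):K}). Then for every stage k ∈ {1,…,K}, every history h⃗_k, and every DTR π, V^{π↑/π^b}_k(h⃗_k) ≥ V^{π/π^b}_k(h⃗_k); in particular π↑ is an IV-improved DTR when the policy class consists of all DTRs. (Corollary 2: alternative characterization of the IV-improved DTR.) -/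

import Mathlib

open MeasureTheory

noncomputable section

open Classical in
/-- Real-valued indicator `1{p}` of a proposition. -/
noncomputable def ind (p : Prop) : ℝ := if p then 1 else 0

/-- Sign function: `+1` for positive, `−1` for negative, `0` at zero. -/
noncomputable def sgn (c : ℝ) : ℝ := if 0 < c then 1 else if c < 0 then -1 else 0

section DTR

/- Multi-stage setup: histories `H k` for stage indices `k = 0, …, K-1`
(stage `k+1` of the paper); `H K` is the terminal (post-trajectory) type.
New covariates arising after stage `k` live in `X (k+1)`, and
`concat k h a r x` is the concatenated history `(h⃗_k, a_k, r_k, x_{k+1})`.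
`P k h a` is the IV-constrained set of joint laws of `(R_k, X_{k+1})`.
At the last stage the new covariate is a null quantity that is simply ignored
(the terminal value function is identically `0`, so the stage-`K` formulas of the
paper are recovered). -/
variable (X : ℕ → Type) [∀ k, MeasurableSpace (X k)]
variable (H : ℕ → Type)
variable (concat : ∀ k, H k → ℝ → ℝ → X (k + 1) → H (k + 1))
variable (P : ∀ k, H k → ℝ → Set (Measure (ℝ × X (k + 1))))

open Classical in
/-- Relative value function of `π` with respect to the baseline `πb`, by backward induction
with `fuel` stages to go.  Writing `a'_k = π^b_k(h⃗_k)`: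
if `π_k(h⃗_k) = a'_k` it is `inf_{p ∈ 𝒫_{h⃗_k,a'_k}} ∫ V^{π/π^b}_{k+1}(h⃗_k,a'_k,r,x) dp`,
otherwise it is
`inf_{p ∈ 𝒫_{h⃗_k,−a'_k}} ∫ [r + V^{π/π^b}_{k+1}(h⃗_k,−a'_k,r,x)] dp − sup_{p' ∈ 𝒫_{h⃗_k,a'_k}} ∫ r dp'`. -/
noncomputable def rVal (πb π : ∀ k, H k → ℝ) : (fuel : ℕ) → (k : ℕ) → H k → ℝ
  | 0, _, _ => 0
  | fuel + 1, k, h =>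
      if π k h = πb k h then
        sInf ((fun p : Measure (ℝ × X (k + 1)) =>
            ∫ q, rVal πb π fuel (k + 1) (concat k h (πb k h) q.1 q.2) ∂p) '' P k h (πb k h))
      else
        sInf ((fun p : Measure (ℝ × X (k + 1)) =>
            ∫ q, (q.1 + rVal πb π fuel (k + 1) (concat k h (-(πb k h)) q.1 q.2)) ∂p)
            '' P k h (-(πb k h)))
          - sSup ((fun p : Measure (ℝ × X (k + 1)) => ∫ q, q.1 ∂p) '' P k h (πb k h))

/-- Relative value function `V^{π/π^b}_k` in a `K`-stage problem (stages `k = 0, …, K-1`). -/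
noncomputable def rV (K : ℕ) (πb π : ∀ k, H k → ℝ) (k : ℕ) (h : H k) : ℝ :=
  rVal X H concat P πb π (K - k) k h

open Classical in
/-- Relative `Q`-function `Q^{π/π^b}_k(h⃗_k, a)`. -/
noncomputable def rQ (K : ℕ) (πb π : ∀ k, H k → ℝ) (k : ℕ) (h : H k) (a : ℝ) : ℝ :=
  if a = πb k h then
    sInf ((fun p : Measure (ℝ × X (k + 1)) =>
        ∫ q, rV X H concat P K πb π (k + 1) (concat k h (πb k h) q.1 q.2) ∂p)
        '' P k h (πb k h))
  else
    sInf ((fun p : Measure (ℝ × X (k + 1)) =>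
        ∫ q, (q.1 + rV X H concat P K πb π (k + 1) (concat k h (-(πb k h)) q.1 q.2)) ∂p)
        '' P k h (-(πb k h)))
      - sSup ((fun p : Measure (ℝ × X (k + 1)) => ∫ q, q.1 ∂p) '' P k h (πb k h))

/-- Relative contrast `𝒞^{π/π^b}_k(h⃗_k)`
`= sup_{p'∈𝒫_{h⃗_k,a'_k}} ∫ r dp' + inf_{p∈𝒫_{h⃗_k,a'_k}} ∫ V^{π/π^b}_{k+1}(h⃗_k,a'_k,r,x) dp
   − inf_{p∈𝒫_{h⃗_k,−a'_k}} ∫ [r + V^{π/π^b}_{k+1}(h⃗_k,−a'_k,r,x)] dp`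
(at the final stage the middle term is `inf ∫ 0 dp = 0`, recovering the stage-`K` formula). -/
noncomputable def rC (K : ℕ) (πb π : ∀ k, H k → ℝ) (k : ℕ) (h : H k) : ℝ :=
  sSup ((fun p : Measure (ℝ × X (k + 1)) => ∫ q, q.1 ∂p) '' P k h (πb k h))
    + sInf ((fun p : Measure (ℝ × X (k + 1)) =>
        ∫ q, rV X H concat P K πb π (k + 1) (concat k h (πb k h) q.1 q.2) ∂p)
        '' P k h (πb k h))
    - sInf ((fun p : Measure (ℝ × X (k + 1)) =>
        ∫ q, (q.1 + rV X H concat P K πb π (k + 1) (concat k h (-(πb k h)) q.1 q.2)) ∂p)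
        '' P k h (-(πb k h)))

end DTR



/-- Pointwise monotonicity of `sInf` over images. -/
lemma sInf_image_le_sInf_image {α : Type*} {P : Set α} {f g : α → ℝ}
    (hbdd : BddBelow (f '' P)) (hne : P.Nonempty) (hfg : ∀ p ∈ P, f p ≤ g p) :
    sInf (f '' P) ≤ sInf (g '' P) := by
  refine le_csInf (hne.image g) ?_
  rintro b ⟨p, hp, rfl⟩
  exact (csInf_le hbdd ⟨p, hp, rfl⟩).trans (hfg p hp)

/-- Unfolding of the relative value function at a non-terminal stage. -/
lemma rV_succ (X : ℕ → Type) [∀ k, MeasurableSpace (X k)] (H : ℕ → Type)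
    (concat : ∀ k, H k → ℝ → ℝ → X (k + 1) → H (k + 1))
    (P : ∀ k, H k → ℝ → Set (Measure (ℝ × X (k + 1))))
    (K : ℕ) (πb π : ∀ k, H k → ℝ) (k : ℕ) (hk : k < K) (h : H k) :
    rV X H concat P K πb π k h = rQ X H concat P K πb π k h (π k h) := by
  have hKk : K - k = (K - (k + 1)) + 1 := by omega
  unfold rV rQ
  rw [hKk]
  rfl

/-- Corollary 2 (alternative characterization of the IV-improved DTR): if the DTR `π↑`
satisfies `π↑_k(h⃗_k) = π^b_k(h⃗_k)·sgn(𝒞^{π↑/π^b}_k(h⃗_k))` whenever the relative contrast is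
nonzero, and `π↑_k(h⃗_k) = π^b_k(h⃗_k)` on ties, then `π↑` maximizes the relative value
function `V^{π/π^b}_k(h⃗_k)` at every stage `k` and every history `h⃗_k`, over all
(Boolean) DTRs `π`: it is an IV-improved DTR. -/
theorem alternative_characterization_IV_improved_DTR
    (X : ℕ → Type) [∀ k, MeasurableSpace (X k)] (H : ℕ → Type)
    (concat : ∀ k, H k → ℝ → ℝ → X (k + 1) → H (k + 1))
    (P : ∀ k, H k → ℝ → Set (Measure (ℝ × X (k + 1))))
    (K : ℕ) (hK : 1 ≤ K)
    (hPne : ∀ k (h : H k) (a : ℝ), a = 1 ∨ a = -1 → (P k h a).Nonempty)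
    (hPprob : ∀ k (h : H k) (a : ℝ), ∀ p ∈ P k h a, IsProbabilityMeasure p)
    (hIntR : ∀ k (h : H k) (a : ℝ), ∀ p ∈ P k h a,
      Integrable (fun q : ℝ × X (k + 1) => q.1) p)
    (hIntV : ∀ (πb π : ∀ k, H k → ℝ) k (h : H k) (a : ℝ), ∀ p ∈ P k h a,
      Integrable (fun q : ℝ × X (k + 1) =>
        rV X H concat P K πb π (k + 1) (concat k h a q.1 q.2)) p)
    (hBddB : ∀ (πb π : ∀ k, H k → ℝ) k (h : H k) (a : ℝ),
      BddBelow ((fun p : Measure (ℝ × X (k + 1)) =>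
          ∫ q, (q.1 + rV X H concat P K πb π (k + 1) (concat k h a q.1 q.2)) ∂p) '' P k h a)
      ∧ BddBelow ((fun p : Measure (ℝ × X (k + 1)) =>
          ∫ q, rV X H concat P K πb π (k + 1) (concat k h a q.1 q.2) ∂p) '' P k h a))
    (hBddA : ∀ k (h : H k) (a : ℝ),
      BddAbove ((fun p : Measure (ℝ × X (k + 1)) => ∫ q, q.1 ∂p) '' P k h a))
    (πb : ∀ k, H k → ℝ) (hπb : ∀ k (h : H k), πb k h = 1 ∨ πb k h = -1)
    (πup : ∀ k, H k → ℝ)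
    (hπup_pm : ∀ k (h : H k), πup k h = 1 ∨ πup k h = -1)
    (hπup_sgn : ∀ k, k < K → ∀ h : H k,
      (rC X H concat P K πb πup k h ≠ 0 →
        πup k h = πb k h * sgn (rC X H concat P K πb πup k h)) ∧
      (rC X H concat P K πb πup k h = 0 → πup k h = πb k h)) :
    ∀ k, k < K → ∀ h : H k, ∀ π : ∀ j, H j → ℝ,
      (∀ j (hj : H j), π j hj = 1 ∨ π j hj = -1) →
      rV X H concat P K πb π k h ≤ rV X H concat P K πb πup k h := by
  suffices hmain : ∀ n k, K - k ≤ n → ∀ h : H k, ∀ π : ∀ j, H j → ℝ,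
      (∀ j (hj : H j), π j hj = 1 ∨ π j hj = -1) →
      rV X H concat P K πb π k h ≤ rV X H concat P K πb πup k h by
    intro k hk h π hπ
    exact hmain (K - k) k le_rfl h π hπ
  intro n
  induction n with
  | zero =>
    intro k hk h π hπ
    have hKk : K - k = 0 := by omega
    simp [rV, hKk, rVal]
  | succ n ih =>
    intro k hk h π hπ
    by_cases hkK : k < K
    swap
    · have hKk : K - k = 0 := by omega
      simp [rV, hKk, rVal]
    -- pointwise induction hypothesis at stage k+1
    have hIH : ∀ h' : H (k + 1),
        rV X H concat P K πb π (k + 1) h' ≤ rV X H concat P K πb πup (k + 1) h' := by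
      intro h'
      exact ih (k + 1) (by omega) h' π hπ
    have hπbne : πb k h ≠ 0 := by rcases hπb k h with e | e <;> rw [e] <;> norm_num
    have hnegne : -(πb k h) ≠ πb k h := by
      intro he
      apply hπbne
      linarith [he]
    have hnegpm : -(πb k h) = 1 ∨ -(πb k h) = -1 := by
      rcases hπb k h with e | e <;> rw [e] <;> norm_num
    -- abbreviations
    set A := sSup ((fun p : Measure (ℝ × X (k + 1)) => ∫ q, q.1 ∂p) '' P k h (πb k h)) with hA
    set Bp := sInf ((fun p : Measure (ℝ × X (k + 1)) =>
        ∫ q, rV X H concat P K πb π (k + 1) (concat k h (πb k h) q.1 q.2) ∂p)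
        '' P k h (πb k h)) with hBp
    set Bu := sInf ((fun p : Measure (ℝ × X (k + 1)) =>
        ∫ q, rV X H concat P K πb πup (k + 1) (concat k h (πb k h) q.1 q.2) ∂p)
        '' P k h (πb k h)) with hBu
    set Dp := sInf ((fun p : Measure (ℝ × X (k + 1)) =>
        ∫ q, (q.1 + rV X H concat P K πb π (k + 1) (concat k h (-(πb k h)) q.1 q.2)) ∂p)
        '' P k h (-(πb k h))) with hDp
    set Du := sInf ((fun p : Measure (ℝ × X (k + 1)) =>
        ∫ q, (q.1 + rV X H concat P K πb πup (k + 1) (concat k h (-(πb k h)) q.1 q.2)) ∂p)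
        '' P k h (-(πb k h))) with hDu
    have hBle : Bp ≤ Bu := by
      refine sInf_image_le_sInf_image ((hBddB πb π k h (πb k h)).2)
        (hPne k h (πb k h) (hπb k h)) ?_
      intro p hp
      exact integral_mono (hIntV πb π k h (πb k h) p hp) (hIntV πb πup k h (πb k h) p hp)
        (fun q => hIH _)
    have hDle : Dp ≤ Du := by
      refine sInf_image_le_sInf_image ((hBddB πb π k h (-(πb k h))).1)
        (hPne k h (-(πb k h)) hnegpm) ?_
      intro p hp
      refine integral_mono ((hIntR k h (-(πb k h)) p hp).add (hIntV πb π k h (-(πb k h)) p hp))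
        ((hIntR k h (-(πb k h)) p hp).add (hIntV πb πup k h (-(πb k h)) p hp)) ?_
      intro q
      exact add_le_add_right (hIH _) q.1
    have hCval : rC X H concat P K πb πup k h = A + Bu - Du := rfl
    rw [rV_succ X H concat P K πb π k hkK h, rV_succ X H concat P K πb πup k hkK h]
    -- value of π is at most max (Bu, Du - A)
    have hπval : rQ X H concat P K πb π k h (π k h) = Bp ∨
        rQ X H concat P K πb π k h (π k h) = Dp - A := by
      by_cases hc : π k h = πb k h
      · left; rw [rQ, if_pos hc]
      · right; rw [rQ, if_neg hc]
    rcases lt_trichotomy (rC X H concat P K πb πup k h) 0 with hC | hC | hC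
    · -- contrast negative: πup deviates, value Du - A, and Bu < Du - A
      have hsgn : sgn (rC X H concat P K πb πup k h) = -1 := by
        rw [sgn, if_neg (by linarith), if_pos hC]
      have hup : πup k h = -(πb k h) := by
        rw [(hπup_sgn k hkK h).1 (ne_of_lt hC), hsgn]; ring
      have hupne : πup k h ≠ πb k h := hup ▸ hnegne
      have hupval : rQ X H concat P K πb πup k h (πup k h) = Du - A := by
        rw [rQ, if_neg hupne]
      rw [hupval]
      have hBuD : Bu < Du - A := by rw [hCval] at hC; linarith
      rcases hπval with hv | hv <;> rw [hv]
      · linarith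
      · linarith
    · -- contrast zero: πup follows πb, value Bu = Du - A
      have hup : πup k h = πb k h := (hπup_sgn k hkK h).2 hC
      have hupval : rQ X H concat P K πb πup k h (πup k h) = Bu := by
        rw [rQ, if_pos hup]
      rw [hupval]
      have hBuD : Bu = Du - A := by rw [hCval] at hC; linarith
      rcases hπval with hv | hv <;> rw [hv]
      · exact hBle
      · linarith
    · -- contrast positive: πup follows πb, value Bu ≥ Du - A
      have hsgn : sgn (rC X H concat P K πb πup k h) = 1 := by
        rw [sgn, if_pos hC]
      have hup : πup k h = πb k h := by
        rw [(hπup_sgn k hkK h).1 (ne_of_gt hC), hsgn]; ring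
      have hupval : rQ X H concat P K πb πup k h (πup k h) = Bu := by
        rw [rQ, if_pos hup]
      rw [hupval]
      have hBuD : Du - A < Bu := by rw [hCval] at hC; linarith
      rcases hπval with hv | hv <;> rw [hv]
      · exact hBle
      · linarith


end
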